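/- Let n ≥ 3 be an integer, let ρ : (0,∞) → (0,∞) be continuously differentiable, let R > 1, and let H : [1,R] → (0,∞) be twice continuously differentiable with H'(t) > 0 for all t ∈ [1,R]. Suppose H satisfies on (1,R) the Euler–Lagrange equation of the Lagrangian L(t,H,K) = ρ(H)·t^{n−1}·(K² + (n−1)H²/t²)^{n/2}, namely d/dt[ n·ρ(H(t))·t^{n−1}·H'(t)·(H'(t)² + (n−1)H(t)²/t²)^{(n−2)/2} ] = ρ'(H(t))·t^{n−1}·(H'(t)² + (n−1)H(t)²/t²)^{n/2} + n(n−1)·ρ(H(t))·t^{n−3}·H(t)·(H'(t)² + (n−1)H(t)²/t²)^{(n−2)/2} for all t ∈ (1,R). Then the function t ↦ 𝓛[H](t) is constant on [1,R]. -/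

import Mathlib

open Set

/-- If `H` is a positive `C²` solution on `[1,R]` with `H' > 0` of the
Euler–Lagrange equation of `L(t,H,K) = ρ(H) t^{n-1} (K² + (n-1)H²/t²)^{n/2}`, then the
characteristic expression
`𝓛[H](t) = ρ(H(t))(H(t)² - t²H'(t)²)(H(t)² + t²H'(t)²/(n-1))^{(n-2)/2}`
is constant on `[1,R]`. -/
theorem stmt2 (n : ℕ) (hn : 3 ≤ n) (ρ ρ' : ℝ → ℝ)
    (hρ : ∀ s ∈ Set.Ioi (0:ℝ), HasDerivAt ρ (ρ' s) s)
    (hρ'cont : ContinuousOn ρ' (Set.Ioi 0))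
    (hρpos : ∀ s ∈ Set.Ioi (0:ℝ), 0 < ρ s)
    (R : ℝ) (hR : 1 < R) (H H' H'' : ℝ → ℝ)
    (hH : ∀ t ∈ Set.Icc 1 R, HasDerivWithinAt H (H' t) (Set.Icc 1 R) t)
    (hH' : ∀ t ∈ Set.Icc 1 R, HasDerivWithinAt H' (H'' t) (Set.Icc 1 R) t)
    (hH'cont : ContinuousOn H' (Set.Icc 1 R))
    (hH''cont : ContinuousOn H'' (Set.Icc 1 R))
    (hHpos : ∀ t ∈ Set.Icc 1 R, 0 < H t)
    (hH'pos : ∀ t ∈ Set.Icc 1 R, 0 < H' t)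
    (hEL : ∀ t ∈ Set.Ioo 1 R,
      HasDerivAt (fun s => (n : ℝ) * ρ (H s) * s ^ (n - 1) * H' s *
          (H' s ^ 2 + ((n : ℝ) - 1) * (H s) ^ 2 / s ^ 2) ^ (((n : ℝ) - 2) / 2))
        (ρ' (H t) * t ^ (n - 1) *
            (H' t ^ 2 + ((n : ℝ) - 1) * (H t) ^ 2 / t ^ 2) ^ ((n : ℝ) / 2)
          + (n : ℝ) * ((n : ℝ) - 1) * ρ (H t) * t ^ (n - 3) * H t *
            (H' t ^ 2 + ((n : ℝ) - 1) * (H t) ^ 2 / t ^ 2) ^ (((n : ℝ) - 2) / 2)) t) :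
    ∃ c : ℝ, ∀ t ∈ Set.Icc 1 R,
      ρ (H t) * ((H t) ^ 2 - t ^ 2 * H' t ^ 2) *
        ((H t) ^ 2 + t ^ 2 * H' t ^ 2 / ((n : ℝ) - 1)) ^ (((n : ℝ) - 2) / 2) = c := by
  have hn3 : (3:ℝ) ≤ (n:ℝ) := by exact_mod_cast hn
  have hn1R : (0:ℝ) < (n:ℝ) - 1 := by linarith
  -- notation
  set J : ℝ → ℝ := fun s =>
      s * (ρ (H s) * s ^ (n - 1) *
        (H' s ^ 2 + ((n : ℝ) - 1) * (H s) ^ 2 / s ^ 2) ^ ((n : ℝ) / 2))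
    - s * H' s * ((n : ℝ) * ρ (H s) * s ^ (n - 1) * H' s *
        (H' s ^ 2 + ((n : ℝ) - 1) * (H s) ^ 2 / s ^ 2) ^ (((n : ℝ) - 2) / 2)) with hJdef
  have hQpos : ∀ t ∈ Icc (1:ℝ) R, 0 < H' t ^ 2 + ((n:ℝ)-1) * (H t) ^ 2 / t ^ 2 := by
    intro t ht
    have ht0 : 0 < t := lt_of_lt_of_le one_pos ht.1
    have hh := hHpos t ht
    positivity
  -- `J` has derivative zero on the interior
  have hJderiv : ∀ t ∈ Ioo (1:ℝ) R, HasDerivAt J 0 t := by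
    intro t ht
    have htIcc : t ∈ Icc (1:ℝ) R := Ioo_subset_Icc_self ht
    have ht0 : (0:ℝ) < t := lt_trans one_pos ht.1
    have ht2 : (t:ℝ) ^ 2 ≠ 0 := by positivity
    have hmem : Icc (1:ℝ) R ∈ nhds t := Icc_mem_nhds ht.1 ht.2
    have hHt : HasDerivAt H (H' t) t := (hH t htIcc).hasDerivAt hmem
    have hH't : HasDerivAt H' (H'' t) t := (hH' t htIcc).hasDerivAt hmem
    have hrt : HasDerivAt (fun s => ρ (H s)) (ρ' (H t) * H' t) t :=
      (hρ (H t) (hHpos t htIcc)).comp t hHt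
    -- derivative of Q
    have hQ2 : HasDerivAt (fun s => (H s) ^ 2 / s ^ 2)
        ((2 * H t * H' t * t ^ 2 - (H t) ^ 2 * (2 * t)) / (t ^ 2) ^ 2) t := by
      have hnum : HasDerivAt (fun s => (H s) ^ 2) (2 * H t * H' t) t := by
        have := hHt.pow 2
        refine this.congr_deriv (Eq.symm ?_)
        push_cast
        ring
      have hden : HasDerivAt (fun s : ℝ => s ^ 2) (2 * t) t := by
        have := hasDerivAt_pow 2 t
        refine this.congr_deriv (Eq.symm ?_)
        push_cast
        ring
      exact hnum.div hden ht2
    have hQt : HasDerivAt (fun s => H' s ^ 2 + ((n:ℝ)-1) * (H s) ^ 2 / s ^ 2)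
        (2 * H' t * H'' t
          + ((n:ℝ)-1) * ((2 * H t * H' t * t ^ 2 - (H t) ^ 2 * (2 * t)) / (t ^ 2) ^ 2)) t := by
      have h1 : HasDerivAt (fun s => H' s ^ 2) (2 * H' t * H'' t) t := by
        have := hH't.pow 2
        refine this.congr_deriv (Eq.symm ?_)
        push_cast
        ring
      have h2 := hQ2.const_mul ((n:ℝ)-1)
      exact h1.add (by simpa [mul_div_assoc] using h2)
    have hQval : (0:ℝ) < H' t ^ 2 + ((n:ℝ)-1) * (H t) ^ 2 / t ^ 2 := hQpos t htIcc
    set Qd : ℝ := 2 * H' t * H'' t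
          + ((n:ℝ)-1) * ((2 * H t * H' t * t ^ 2 - (H t) ^ 2 * (2 * t)) / (t ^ 2) ^ 2) with hQd
    have hQhalf : HasDerivAt
        (fun s => (H' s ^ 2 + ((n:ℝ)-1) * (H s) ^ 2 / s ^ 2) ^ ((n:ℝ)/2))
        (Qd * ((n:ℝ)/2) *
          (H' t ^ 2 + ((n:ℝ)-1) * (H t) ^ 2 / t ^ 2) ^ ((n:ℝ)/2 - 1)) t :=
      hQt.rpow_const (Or.inl hQval.ne')
    have hLt : HasDerivAt
        (fun s => ρ (H s) * s ^ (n - 1) *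
          (H' s ^ 2 + ((n:ℝ)-1) * (H s) ^ 2 / s ^ 2) ^ ((n:ℝ)/2))
        ((ρ' (H t) * H' t * t ^ (n-1) + ρ (H t) * (((n-1:ℕ):ℝ) * t ^ (n-1-1)))
            * (H' t ^ 2 + ((n:ℝ)-1) * (H t) ^ 2 / t ^ 2) ^ ((n:ℝ)/2)
          + (ρ (H t) * t ^ (n-1)) *
            (Qd * ((n:ℝ)/2) *
              (H' t ^ 2 + ((n:ℝ)-1) * (H t) ^ 2 / t ^ 2) ^ ((n:ℝ)/2 - 1))) t :=
      (hrt.mul (hasDerivAt_pow (n-1) t)).mul hQhalf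
    have h1 : HasDerivAt (fun s => s * (ρ (H s) * s ^ (n - 1) *
          (H' s ^ 2 + ((n:ℝ)-1) * (H s) ^ 2 / s ^ 2) ^ ((n:ℝ)/2)))
        (1 * (ρ (H t) * t ^ (n - 1) *
          (H' t ^ 2 + ((n:ℝ)-1) * (H t) ^ 2 / t ^ 2) ^ ((n:ℝ)/2))
         + t * ((ρ' (H t) * H' t * t ^ (n-1) + ρ (H t) * (((n-1:ℕ):ℝ) * t ^ (n-1-1)))
            * (H' t ^ 2 + ((n:ℝ)-1) * (H t) ^ 2 / t ^ 2) ^ ((n:ℝ)/2)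
          + (ρ (H t) * t ^ (n-1)) *
            (Qd * ((n:ℝ)/2) *
              (H' t ^ 2 + ((n:ℝ)-1) * (H t) ^ 2 / t ^ 2) ^ ((n:ℝ)/2 - 1)))) t :=
      (hasDerivAt_id t).mul hLt
    have h2 : HasDerivAt (fun s => s * H' s * ((n : ℝ) * ρ (H s) * s ^ (n - 1) * H' s *
          (H' s ^ 2 + ((n : ℝ) - 1) * (H s) ^ 2 / s ^ 2) ^ (((n : ℝ) - 2) / 2)))
        ((1 * H' t + t * H'' t) * ((n : ℝ) * ρ (H t) * t ^ (n - 1) * H' t *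
          (H' t ^ 2 + ((n : ℝ) - 1) * (H t) ^ 2 / t ^ 2) ^ (((n : ℝ) - 2) / 2))
         + (t * H' t) *
          (ρ' (H t) * t ^ (n - 1) *
            (H' t ^ 2 + ((n : ℝ) - 1) * (H t) ^ 2 / t ^ 2) ^ ((n : ℝ) / 2)
          + (n : ℝ) * ((n : ℝ) - 1) * ρ (H t) * t ^ (n - 3) * H t *
            (H' t ^ 2 + ((n : ℝ) - 1) * (H t) ^ 2 / t ^ 2) ^ (((n : ℝ) - 2) / 2))) t :=
      ((hasDerivAt_id t).mul hH't).mul (hEL t ht)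
    have hJt := h1.sub h2
    refine hJt.congr_deriv (Eq.symm ?_)
    -- now prove the derivative value is zero
    have hsplit : (H' t ^ 2 + ((n:ℝ)-1) * (H t) ^ 2 / t ^ 2) ^ ((n:ℝ)/2)
        = (H' t ^ 2 + ((n:ℝ)-1) * (H t) ^ 2 / t ^ 2) ^ (((n:ℝ)-2)/2)
          * (H' t ^ 2 + ((n:ℝ)-1) * (H t) ^ 2 / t ^ 2) := by
      rw [show (n:ℝ)/2 = ((n:ℝ)-2)/2 + 1 by ring, Real.rpow_add hQval, Real.rpow_one]
    have hexp : (n:ℝ)/2 - 1 = ((n:ℝ)-2)/2 := by ring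
    have hcast : ((n-1:ℕ):ℝ) = (n:ℝ) - 1 := by
      push_cast [Nat.cast_sub (show 1 ≤ n by omega)]
      ring
    have hpow1 : t ^ (n-1) = t ^ (n-3) * t ^ 2 := by
      rw [← pow_add]; congr 1; omega
    have hpow2 : t ^ (n-1-1) = t ^ (n-3) * t := by
      rw [← pow_succ]; congr 1; omega
    rw [hexp, hsplit, hcast, hpow1, hpow2, hQd]
    field_simp
    ring
  -- continuity of J on [1, R]
  have hHcont : ContinuousOn H (Icc 1 R) := fun t ht => (hH t ht).continuousWithinAt
  have hρHcont : ContinuousOn (fun s => ρ (H s)) (Icc 1 R) := by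
    intro t ht
    exact ((hρ (H t) (hHpos t ht)).continuousAt).comp_continuousWithinAt (hHcont t ht)
  have htne : ∀ t ∈ Icc (1:ℝ) R, (t:ℝ) ^ 2 ≠ 0 := by
    intro t ht
    have : (0:ℝ) < t := lt_of_lt_of_le one_pos ht.1
    positivity
  have hQcont : ContinuousOn (fun s => H' s ^ 2 + ((n:ℝ)-1) * (H s) ^ 2 / s ^ 2) (Icc 1 R) := by
    apply ContinuousOn.add (hH'cont.pow 2)
    exact (continuousOn_const.mul (hHcont.pow 2)).div
      ((continuous_pow 2).continuousOn) htne
  have hJcont : ContinuousOn J (Icc 1 R) := by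
    rw [hJdef]
    apply ContinuousOn.sub
    · exact continuousOn_id.mul ((hρHcont.mul (continuousOn_pow (n-1))).mul
        (hQcont.rpow_const (fun t ht => Or.inl (hQpos t ht).ne')))
    · exact ((continuousOn_id.mul hH'cont)).mul
        ((((continuousOn_const.mul hρHcont).mul (continuousOn_pow (n-1))).mul hH'cont).mul
          (hQcont.rpow_const (fun t ht => Or.inl (hQpos t ht).ne')))
  -- J is constant on [1, R]
  have hJdiff : DifferentiableOn ℝ J (interior (Icc (1:ℝ) R)) := by
    rw [interior_Icc]
    exact fun x hx => (hJderiv x hx).differentiableAt.differentiableWithinAt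
  have hJconst : ∀ t ∈ Icc (1:ℝ) R, J t = J 1 := by
    have hmono : MonotoneOn J (Icc 1 R) :=
      monotoneOn_of_deriv_nonneg (convex_Icc 1 R) hJcont hJdiff
        (fun x hx => by
          rw [interior_Icc] at hx
          rw [(hJderiv x hx).deriv])
    have hanti : AntitoneOn J (Icc 1 R) :=
      antitoneOn_of_deriv_nonpos (convex_Icc 1 R) hJcont hJdiff
        (fun x hx => by
          rw [interior_Icc] at hx
          rw [(hJderiv x hx).deriv])
    intro t ht
    have h1 : (1:ℝ) ∈ Icc (1:ℝ) R := ⟨le_refl _, le_of_lt hR⟩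
    exact le_antisymm (hanti h1 ht ht.1) (hmono h1 ht ht.1)
  -- relate the characteristic expression to J
  refine ⟨J 1 / (((n:ℝ)-1) ^ ((n:ℝ)/2)), ?_⟩
  have hDpos : (0:ℝ) < ((n:ℝ)-1) ^ ((n:ℝ)/2) := Real.rpow_pos_of_pos hn1R _
  intro t ht
  have ht0 : (0:ℝ) < t := lt_of_lt_of_le one_pos ht.1
  have hQv : (0:ℝ) < H' t ^ 2 + ((n:ℝ)-1) * (H t) ^ 2 / t ^ 2 := hQpos t ht
  have hh := hHpos t ht
  have hBv : (0:ℝ) < (H t) ^ 2 + t ^ 2 * H' t ^ 2 / ((n:ℝ)-1) := by positivity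
  rw [eq_div_iff hDpos.ne', ← hJconst t ht]
  -- key algebraic identity
  have hkey : t ^ 2 * (H' t ^ 2 + ((n:ℝ)-1) * (H t) ^ 2 / t ^ 2)
      = ((n:ℝ)-1) * ((H t) ^ 2 + t ^ 2 * H' t ^ 2 / ((n:ℝ)-1)) := by
    field_simp
    ring
  have hBe : (((n:ℝ)-1)) ^ (((n:ℝ)-2)/2)
        * ((H t) ^ 2 + t ^ 2 * H' t ^ 2 / ((n:ℝ)-1)) ^ (((n:ℝ)-2)/2)
      = t ^ (n-2) * (H' t ^ 2 + ((n:ℝ)-1) * (H t) ^ 2 / t ^ 2) ^ (((n:ℝ)-2)/2) := by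
    rw [← Real.mul_rpow hn1R.le hBv.le, ← hkey,
      Real.mul_rpow (by positivity) hQv.le]
    congr 1
    rw [← Real.rpow_natCast t 2, ← Real.rpow_mul ht0.le, ← Real.rpow_natCast t (n-2)]
    congr 1
    push_cast [Nat.cast_sub (show 2 ≤ n by omega)]
    ring
  have hsplit : (H' t ^ 2 + ((n:ℝ)-1) * (H t) ^ 2 / t ^ 2) ^ ((n:ℝ)/2)
      = (H' t ^ 2 + ((n:ℝ)-1) * (H t) ^ 2 / t ^ 2) ^ (((n:ℝ)-2)/2)
        * (H' t ^ 2 + ((n:ℝ)-1) * (H t) ^ 2 / t ^ 2) := by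
    rw [show (n:ℝ)/2 = ((n:ℝ)-2)/2 + 1 by ring, Real.rpow_add hQv, Real.rpow_one]
  have hD : (((n:ℝ)-1)) ^ ((n:ℝ)/2) = ((n:ℝ)-1) * (((n:ℝ)-1)) ^ (((n:ℝ)-2)/2) := by
    rw [show (n:ℝ)/2 = 1 + ((n:ℝ)-2)/2 by ring, Real.rpow_add hn1R, Real.rpow_one]
  have hpow1 : t ^ (n-1) = t ^ (n-2) * t := by
    rw [← pow_succ]; congr 1; omega
  calc ρ (H t) * ((H t) ^ 2 - t ^ 2 * H' t ^ 2) *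
        ((H t) ^ 2 + t ^ 2 * H' t ^ 2 / ((n : ℝ) - 1)) ^ (((n : ℝ) - 2) / 2)
        * (((n:ℝ)-1)) ^ ((n:ℝ)/2)
      = ((n:ℝ)-1) * (ρ (H t) * ((H t) ^ 2 - t ^ 2 * H' t ^ 2))
        * ((((n:ℝ)-1)) ^ (((n:ℝ)-2)/2)
          * ((H t) ^ 2 + t ^ 2 * H' t ^ 2 / ((n:ℝ)-1)) ^ (((n:ℝ)-2)/2)) := by
        rw [hD]; ring
    _ = ((n:ℝ)-1) * (ρ (H t) * ((H t) ^ 2 - t ^ 2 * H' t ^ 2))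
        * (t ^ (n-2) * (H' t ^ 2 + ((n:ℝ)-1) * (H t) ^ 2 / t ^ 2) ^ (((n:ℝ)-2)/2)) := by
        rw [hBe]
    _ = J t := by
        rw [hJdef]
        simp only
        rw [hsplit, hpow1]
        field_simp
        ring
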